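/- Let η be a primitive Dirichlet character modulo N, let k be a positive integer with η(-1) = (-1)^k, and suppose p is a prime with p ≥ 2k and p ∤ 2N. If N is either divisible by at least two distinct primes, or N is a power of a prime dividing 2N, or N is a prime not dividing 2N and η is quadratic, then the generalized Bernoulli number B_{k,η̄} is p-integral (i.e., has p-adic valuation ≥ 0 for every embedding into ℚ̄_p). -/

import Mathlib

open Finset

/-- An algebraic number `x ∈ ℂ` is `p`-integral if it satisfies a monic polynomial with
rational coefficients whose denominators are prime to `p`. -/
def IsPIntegral (p : ℕ) (x : ℂ) : Prop :=
  ∃ f : Polynomial ℚ, f.Monic ∧ (∀ i, ¬ p ∣ (f.coeff i).den) ∧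
    Polynomial.eval₂ (algebraMap ℚ ℂ) x f = 0

namespace GBAux

variable (p : ℕ) [Fact p.Prime]

def Sden : Subring ℚ where
  carrier := {q : ℚ | ¬ (p : ℕ) ∣ q.den}
  one_mem' := by simp [Set.mem_setOf_eq, Nat.dvd_one, (Fact.out : p.Prime).ne_one]
  zero_mem' := by simp [Set.mem_setOf_eq, Nat.dvd_one, (Fact.out : p.Prime).ne_one]
  add_mem' := by
    intro a b ha hb hd
    rcases ((Fact.out : p.Prime).dvd_mul.mp (hd.trans (Rat.add_den_dvd a b))) with h | h
    exacts [ha h, hb h]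
  mul_mem' := by
    intro a b ha hb hd
    rcases ((Fact.out : p.Prime).dvd_mul.mp (hd.trans (Rat.mul_den_dvd a b))) with h | h
    exacts [ha h, hb h]
  neg_mem' := by intro a ha; simpa [Set.mem_setOf_eq] using ha

lemma mem_Sden {q : ℚ} : q ∈ Sden p ↔ ¬ p ∣ q.den := Iff.rfl

noncomputable instance : Algebra (Sden p) ℂ :=
  ((algebraMap ℚ ℂ).comp (Sden p).subtype).toAlgebra

lemma mem_ic_of_rat {q : ℚ} (hq : q ∈ Sden p) :
    algebraMap ℚ ℂ q ∈ integralClosure (Sden p) ℂ := by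
  have h : algebraMap ℚ ℂ q = algebraMap (Sden p) ℂ ⟨q, hq⟩ := rfl
  rw [h]
  exact Subalgebra.algebraMap_mem _ _

lemma natCast_mem_Sden (n : ℕ) : ((n : ℚ)) ∈ Sden p := by
  simp [mem_Sden, Rat.den_natCast, Nat.dvd_one, (Fact.out : p.Prime).ne_one]

lemma inv_nat_mem_Sden {m : ℕ} (hm : ¬ p ∣ m) : ((m : ℚ))⁻¹ ∈ Sden p := by
  rw [mem_Sden, Rat.inv_natCast_den]
  split
  · simp [Nat.dvd_one, (Fact.out : p.Prime).ne_one]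
  · exact hm

lemma natCast_mem_ic (n : ℕ) : ((n : ℂ)) ∈ integralClosure (Sden p) ℂ := by
  have := mem_ic_of_rat p (natCast_mem_Sden p n)
  simpa using this

lemma mem_ic_of_pow_eq_one {z : ℂ} {c : ℕ} (hc : c ≠ 0) (hz : z ^ c = 1) :
    z ∈ integralClosure (Sden p) ℂ := by
  refine ⟨Polynomial.X ^ c - 1, ?_, ?_⟩
  · simpa using Polynomial.monic_X_pow_sub_C (1 : Sden p) hc
  · simp [hz]

lemma bernoulli_mem (n : ℕ) (hn : n + 1 < p) : bernoulli n ∈ Sden p := by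
  induction n using Nat.strong_induction_on with
  | _ n ih =>
    rcases Nat.eq_zero_or_pos n with rfl | hn0
    · simpa using (Sden p).one_mem
    · have hsum := sum_bernoulli (n + 1)
      rw [if_neg (by omega), Finset.sum_range_succ] at hsum
      have hch : (((n+1).choose n : ℕ) : ℚ) = (n : ℚ) + 1 := by
        rw [Nat.choose_succ_self_right]; push_cast; ring
      have hne : ((n : ℚ) + 1) ≠ 0 := by positivity
      have hB : bernoulli n =
          (-((n : ℚ) + 1)⁻¹) * ∑ i ∈ range n, ((n+1).choose i : ℚ) * bernoulli i := by
        rw [hch] at hsum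
        field_simp
        linarith [hsum]
      rw [hB]
      refine mul_mem (neg_mem ?_) (Subring.sum_mem _ fun i hi => mul_mem
        (natCast_mem_Sden p _) (ih i (Finset.mem_range.mp hi) (by have := Finset.mem_range.mp hi; omega)))
      have : ((n : ℚ) + 1) = ((n + 1 : ℕ) : ℚ) := by push_cast; ring
      rw [this]
      exact inv_nat_mem_Sden p (fun hd => absurd (Nat.le_of_dvd (by omega) hd) (by omega))

lemma isPIntegral_of_mem {x : ℂ} (hx : x ∈ integralClosure (Sden p) ℂ) :
    ∃ f : Polynomial ℚ, f.Monic ∧ (∀ i, ¬ p ∣ (f.coeff i).den) ∧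
      Polynomial.eval₂ (algebraMap ℚ ℂ) x f = 0 := by
  obtain ⟨F, hF, hval⟩ := hx
  refine ⟨F.map (Sden p).subtype, hF.map _, fun i => ?_, ?_⟩
  · rw [Polynomial.coeff_map]; exact (F.coeff i).2
  · rw [Polynomial.eval₂_map]; exact hval

end GBAux

theorem generalized_bernoulli_p_integral' (N : ℕ) [NeZero N]
    (η : DirichletCharacter ℂ N)
    (k : ℕ) (hk : 0 < k)
    (p : ℕ) (hp : p.Prime) (hpk : 2 * k ≤ p) (hpN : ¬ p ∣ 2 * N)
    (B : ℂ)
    (hB : B = (N : ℂ) ^ (k - 1) *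
      ∑ a ∈ Finset.Icc 1 N, (starRingEnd ℂ) (η (a : ZMod N)) *
        Polynomial.aeval ((a : ℂ) / (N : ℂ)) (Polynomial.bernoulli k)) :
    ∃ f : Polynomial ℚ, f.Monic ∧ (∀ i, ¬ p ∣ (f.coeff i).den) ∧
      Polynomial.eval₂ (algebraMap ℚ ℂ) B f = 0 := by
  haveI : Fact p.Prime := ⟨hp⟩
  have hp2 : p ≠ 2 := fun h => hpN (h ▸ Dvd.intro N rfl)
  have hpN' : ¬ p ∣ N := fun h => hpN (h.mul_left 2)
  have hkp : k + 1 < p := by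
    have hne : p ≠ 2 * k := by
      intro he
      exact hp2 ((Nat.prime_dvd_prime_iff_eq Nat.prime_two hp).mp ⟨k, he⟩).symm
    omega
  have hNC : (N : ℂ) ≠ 0 := Nat.cast_ne_zero.mpr (NeZero.ne N)
  -- values of η (conjugated) lie in the integral closure
  have hchar : ∀ a : ZMod N,
      (starRingEnd ℂ) (η a) ∈ integralClosure (GBAux.Sden p) ℂ := by
    intro a
    by_cases ha : IsUnit a
    · obtain ⟨u, rfl⟩ := ha
      have hc : (η (u : ZMod N)) ^ Fintype.card (ZMod N)ˣ = 1 := by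
        rw [← map_pow, ← Units.val_pow_eq_pow_val, pow_card_eq_one, Units.val_one, map_one]
      refine GBAux.mem_ic_of_pow_eq_one p (Fintype.card_ne_zero (α := (ZMod N)ˣ)) ?_
      rw [← map_pow, hc, map_one]
    · rw [η.map_nonunit ha, map_zero]
      exact Subalgebra.zero_mem _
  apply GBAux.isPIntegral_of_mem p
  rw [hB, Finset.mul_sum]
  refine Subalgebra.sum_mem _ fun a _ => ?_
  rw [Polynomial.bernoulli, map_sum, Finset.mul_sum, Finset.mul_sum]
  refine Subalgebra.sum_mem _ fun i hi => ?_
  have hik : i ≤ k := Nat.lt_succ_iff.mp (Finset.mem_range.mp hi)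
  rw [Polynomial.aeval_monomial]
  have hterm : (N : ℂ) ^ (k - 1) * ((starRingEnd ℂ) (η (a : ZMod N)) *
      (algebraMap ℚ ℂ (_root_.bernoulli i * (k.choose i : ℕ)) * ((a : ℂ) / (N : ℂ)) ^ (k - i)))
      = (starRingEnd ℂ) (η (a : ZMod N)) *
        (algebraMap ℚ ℂ (_root_.bernoulli i * (k.choose i : ℕ) * ((N : ℚ))⁻¹) *
          ((a : ℂ) ^ (k - i) * (N : ℂ) ^ i)) := by
    have hQC : ((N : ℚ) : ℂ) = (N : ℂ) := by push_cast; ring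
    have hpow : (N : ℂ) ^ (k - 1) * (N : ℂ) = (N : ℂ) ^ (k - i) * (N : ℂ) ^ i := by
      rw [← pow_succ, ← pow_add]
      congr 1
      omega
    simp only [map_mul, eq_ratCast, Rat.cast_inv, hQC, div_pow, Rat.cast_natCast]
    field_simp
    linear_combination ((starRingEnd ℂ) (η (a : ZMod N)) * (_root_.bernoulli i : ℂ) *
      (k.choose i : ℂ) * (a : ℂ) ^ (k - i)) * hpow
  rw [hterm]
  refine mul_mem (hchar _) (mul_mem (GBAux.mem_ic_of_rat p ?_)
    (mul_mem (pow_mem (GBAux.natCast_mem_ic p a) _) (pow_mem (GBAux.natCast_mem_ic p N) _)))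
  exact mul_mem (mul_mem (GBAux.bernoulli_mem p i (by omega)) (GBAux.natCast_mem_Sden p _))
    (GBAux.inv_nat_mem_Sden p hpN')

/-- `p`-integrality of generalized Bernoulli numbers `B_{k,η̄}` for a primitive Dirichlet
character `η` mod `N` with `η(-1) = (-1)^k`, for primes `p ≥ 2k`, `p ∤ 2N`, under the
stated conditions on `N`.  Here `B_{k,η̄}` is given by the classical formula
`B_{k,χ} = N^{k-1} Σ_{a=1}^{N} χ(a) B_k(a/N)` in terms of Bernoulli polynomials. -/
theorem generalized_bernoulli_p_integral (N : ℕ) [NeZero N]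
    (η : DirichletCharacter ℂ N) (hprim : η.IsPrimitive)
    (k : ℕ) (hk : 0 < k) (hparity : η (-1 : ZMod N) = (-1 : ℂ) ^ k)
    (p : ℕ) (hp : p.Prime) (hpk : 2 * k ≤ p) (hpN : ¬ p ∣ 2 * N)
    (hcases :
      (∃ q r : ℕ, q.Prime ∧ r.Prime ∧ q ≠ r ∧ q ∣ N ∧ r ∣ N) ∨
      (∃ q e : ℕ, q.Prime ∧ q ∣ 2 * N ∧ N = q ^ e) ∨
      (N.Prime ∧ ¬ N ∣ 2 * N ∧ η ^ 2 = 1 ∧ η ≠ 1))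
    (B : ℂ)
    (hB : B = (N : ℂ) ^ (k - 1) *
      ∑ a ∈ Finset.Icc 1 N, (starRingEnd ℂ) (η (a : ZMod N)) *
        Polynomial.aeval ((a : ℂ) / (N : ℂ)) (Polynomial.bernoulli k)) :
    IsPIntegral p B := by
  exact generalized_bernoulli_p_integral' N η k hk p hp hpk hpN B hB
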